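/- ℤ equipped with the profinite topology is homeomorphic to ℚ with its standard (Euclidean, order) topology. -/

import Mathlib

/-- The profinite topology on `ℤ`: the topology generated by the arithmetic progressions
`z + kℤ` for `z ∈ ℤ` and `k ≥ 1`. -/
def profiniteTopologyZ : TopologicalSpace ℤ :=
  TopologicalSpace.generateFrom
    {U | ∃ z k : ℤ, 1 ≤ k ∧ U = {x : ℤ | ∃ m : ℤ, x = z + k * m}}

namespace ProfiniteZAux

/-- Factorial, as an integer. -/
def F (i : ℕ) : ℤ := (Nat.factorial i : ℤ)

lemma F_pos (i : ℕ) : 0 < F i := by unfold F; exact_mod_cast Nat.factorial_pos i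

lemma F_dvd {i j : ℕ} (h : i ≤ j) : F i ∣ F j := by
  unfold F; exact_mod_cast Nat.factorial_dvd_factorial h

lemma F_succ (i : ℕ) : F (i + 1) = ((i : ℤ) + 1) * F i := by
  unfold F; rw [Nat.factorial_succ]; push_cast; ring

lemma le_F (i : ℕ) : (i : ℤ) ≤ F i := by unfold F; exact_mod_cast Nat.self_le_factorial i

/-- The `i`-th digit of `x` in the mixed-radix (factorial) representation. -/
def d (i : ℕ) (x : ℤ) : ℤ := (x % F (i + 1)) / F i

lemma d_nonneg (i : ℕ) (x : ℤ) : 0 ≤ d i x :=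
  Int.ediv_nonneg (Int.emod_nonneg x (F_pos (i + 1)).ne') (F_pos i).le

lemma emod_decomp (i : ℕ) (x : ℤ) : x % F (i + 1) = F i * d i x + x % F i := by
  have h1 : (x % F (i + 1)) % F i = x % F i := Int.emod_emod_of_dvd x (F_dvd (Nat.le_succ i))
  have h2 := Int.mul_ediv_add_emod (x % F (i + 1)) (F i)
  rw [h1] at h2
  unfold d
  omega

lemma d_congr {i : ℕ} {x y : ℤ} (h : F (i + 1) ∣ (y - x)) : d i x = d i y := by
  have hxy : x % F (i + 1) = y % F (i + 1) := Int.modEq_iff_dvd.mpr h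
  unfold d; rw [hxy]

lemma d_eq_iff {i : ℕ} {x y : ℤ} (h : F i ∣ (y - x)) :
    d i x = d i y ↔ F (i + 1) ∣ (y - x) := by
  constructor
  · intro hd
    have hx := emod_decomp i x
    have hy := emod_decomp i y
    have hxy : x % F i = y % F i := Int.modEq_iff_dvd.mpr h
    have hmod : x % F (i + 1) = y % F (i + 1) := by rw [hx, hy, hd, hxy]
    exact Int.ModEq.dvd (hmod : Int.ModEq (F (i + 1)) x y)
  · exact d_congr

/-- The "twisted" digit used for the lexicographic order: at odd positions
the order of digits is reversed. -/
def e (i : ℕ) (x : ℤ) : ℤ := if Even i then d i x else (i : ℤ) - d i x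

lemma e_congr {i : ℕ} {x y : ℤ} (h : F (i + 1) ∣ (y - x)) : e i x = e i y := by
  unfold e; rw [d_congr h]

lemma e_ne_of_d_ne {i : ℕ} {x y : ℤ} (h : d i x ≠ d i y) : e i x ≠ e i y := by
  unfold e; split <;> omega

/-- The twisted lexicographic (profinite) strict order on `ℤ`. -/
def plt (x y : ℤ) : Prop := ∃ i : ℕ, 1 ≤ i ∧ F i ∣ (y - x) ∧ e i x < e i y

lemma exists_firstDiff {x y : ℤ} (h : y - x ≠ 0) :
    ∃ i : ℕ, 1 ≤ i ∧ F i ∣ (y - x) ∧ ¬ F (i + 1) ∣ (y - x) := by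
  classical
  have hex : ∃ j, ¬ F j ∣ (y - x) := by
    refine ⟨(y - x).natAbs + 1, fun hdvd => ?_⟩
    have h1 : F ((y - x).natAbs + 1) ≤ |y - x| :=
      Int.le_of_dvd (abs_pos.mpr h) ((dvd_abs _ _).mpr hdvd)
    have h2 := le_F ((y - x).natAbs + 1)
    have h3 : |y - x| = ((y - x).natAbs : ℤ) := Int.abs_eq_natAbs _
    omega
  have hspec : ¬ F (Nat.find hex) ∣ (y - x) := Nat.find_spec hex
  have h2 : 2 ≤ Nat.find hex := by
    by_contra h'
    have hF1 : F (Nat.find hex) = 1 := by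
      interval_cases h : Nat.find hex <;> simp [F, Nat.factorial]
    exact hspec (hF1 ▸ one_dvd _)
  refine ⟨Nat.find hex - 1, by omega, ?_, ?_⟩
  · have := Nat.find_min hex (m := Nat.find hex - 1) (by omega)
    simpa using this
  · have heq : Nat.find hex - 1 + 1 = Nat.find hex := by omega
    rw [heq]; exact hspec

lemma plt_trichotomy {x y : ℤ} (h : x ≠ y) : plt x y ∨ plt y x := by
  obtain ⟨i, hi1, hid, hnd⟩ := exists_firstDiff (sub_ne_zero.mpr (Ne.symm h))
  have hdne : d i x ≠ d i y := fun hd => hnd ((d_eq_iff hid).mp hd)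
  have hene := e_ne_of_d_ne hdne
  rcases lt_or_gt_of_ne hene with h' | h'
  · exact Or.inl ⟨i, hi1, hid, h'⟩
  · refine Or.inr ⟨i, hi1, ?_, h'⟩
    have : x - y = -(y - x) := by ring
    rw [this]; exact dvd_neg.mpr hid

lemma plt_irrefl (x : ℤ) : ¬ plt x x := by
  rintro ⟨i, _, _, h⟩; exact lt_irrefl _ h

lemma e_agree_of_lt {i j : ℕ} {x y : ℤ} (hij : i < j) (h : F j ∣ (y - x)) :
    e i x = e i y :=
  e_congr (dvd_trans (F_dvd (by omega)) h)

lemma plt_asymm {x y : ℤ} (h1 : plt x y) (h2 : plt y x) : False := by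
  obtain ⟨i, hi1, hid, hie⟩ := h1
  obtain ⟨j, hj1, hjd, hje⟩ := h2
  rcases lt_trichotomy i j with h | rfl | h
  · have := e_agree_of_lt (x := y) (y := x) h hjd
    omega
  · omega
  · have := e_agree_of_lt (x := x) (y := y) h hid
    omega

lemma plt_trans {x y z : ℤ} (h1 : plt x y) (h2 : plt y z) : plt x z := by
  obtain ⟨i, hi1, hid, hie⟩ := h1
  obtain ⟨j, hj1, hjd, hje⟩ := h2
  have hsum : z - x = (z - y) + (y - x) := by ring
  rcases lt_trichotomy i j with h | rfl | h
  · refine ⟨i, hi1, ?_, ?_⟩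
    · rw [hsum]; exact dvd_add (dvd_trans (F_dvd (by omega)) hjd) hid
    · have := e_agree_of_lt (x := y) (y := z) h hjd
      omega
  · exact ⟨i, hi1, by rw [hsum]; exact dvd_add hjd hid, lt_trans hie hje⟩
  · refine ⟨j, hj1, ?_, ?_⟩
    · rw [hsum]; exact dvd_add hjd (dvd_trans (F_dvd (by omega)) hid)
    · have := e_agree_of_lt (x := x) (y := y) h hid
      omega

/-- Type synonym for `ℤ` carrying the profinite topology and the twisted
lexicographic order. -/
def Zp : Type := ℤ

instance : Countable Zp := inferInstanceAs (Countable ℤ)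
instance : Nonempty Zp := ⟨(0 : ℤ)⟩

/-- The twisted lexicographic order on `Zp`. -/
def pltR : Zp → Zp → Prop := fun x y => plt x y

instance : IsTrichotomous Zp pltR :=
  ⟨fun x y => by
    by_cases h : x = y
    · exact fun _ _ => h
    · rcases plt_trichotomy h with h' | h'
      · exact fun h1 _ => absurd h' h1
      · exact fun _ h2 => absurd h' h2⟩

instance : IsIrrefl Zp pltR := ⟨fun x => plt_irrefl x⟩

instance : IsTrans Zp pltR := ⟨fun _ _ _ h1 h2 => plt_trans h1 h2⟩

instance : IsStrictTotalOrder Zp pltR := {}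

noncomputable instance : LinearOrder Zp := by
  classical exact linearOrderOfSTO pltR

lemma lt_iff {x y : Zp} : x < y ↔ plt x y := Iff.rfl

lemma d_of_bounds {M : ℕ} {w c : ℤ} (hc0 : 0 ≤ c) (hcM : c ≤ (M : ℤ))
    (h1 : c * F M ≤ w) (h2 : w < (c + 1) * F M) : d M w = c := by
  have hFpos := F_pos M
  have hw0 : 0 ≤ w := le_trans (by positivity) h1
  have hwG : w < F (M + 1) := by
    rw [F_succ]
    exact lt_of_lt_of_le h2 (mul_le_mul_of_nonneg_right (by omega) hFpos.le)
  unfold d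
  rw [Int.emod_eq_of_lt hw0 hwG]
  have hle : c ≤ w / F M := (Int.le_ediv_iff_mul_le hFpos).mpr h1
  have hlt : w / F M < c + 1 := (Int.ediv_lt_iff_lt_mul hFpos).mpr (by linarith)
  omega

lemma d_small {M : ℕ} {x : ℤ} (h1 : 0 ≤ x) (h2 : x < F M) : d M x = 0 :=
  d_of_bounds le_rfl (by positivity) (by simpa) (by simpa)

lemma d_small_succ {M : ℕ} {x : ℤ} (hM : 1 ≤ M) (h1 : 0 ≤ x) (h2 : x < F M) :
    d M (x + F M) = 1 := by
  have hM1 : (1 : ℤ) ≤ (M : ℤ) := by exact_mod_cast hM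
  exact d_of_bounds (by norm_num) hM1 (by linarith) (by linarith)

lemma d_neg_top {M : ℕ} {x : ℤ} (h1 : -F M ≤ x) (h2 : x < 0) : d M x = M := by
  have hFs : F (M + 1) = ((M : ℤ) + 1) * F M := F_succ M
  rw [show d M x = d M (x + F (M + 1)) from d_congr ⟨1, by ring⟩]
  apply d_of_bounds (by positivity) le_rfl
  · rw [hFs]; linarith
  · rw [hFs]; linarith

lemma d_neg_pred {M : ℕ} {x : ℤ} (hM : 1 ≤ M) (h1 : -F M ≤ x) (h2 : x < 0) :
    d M (x - F M) = (M : ℤ) - 1 := by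
  have hM1 : (1 : ℤ) ≤ (M : ℤ) := by exact_mod_cast hM
  have hFs : F (M + 1) = ((M : ℤ) + 1) * F M := F_succ M
  rw [show d M (x - F M) = d M (x - F M + F (M + 1)) from d_congr ⟨1, by ring⟩]
  apply d_of_bounds (by omega) (by omega)
  · rw [hFs]; linarith
  · rw [hFs]; linarith

lemma upMove (x : ℤ) (N : ℕ) :
    ∃ M : ℕ, N ≤ M ∧ 1 ≤ M ∧ ∃ z : ℤ, F M ∣ (z - x) ∧ e M x < e M z := by
  rcases le_or_gt 0 x with hx | hx
  · refine ⟨2 * (N + x.natAbs + 1), by omega, by omega, x + F (2 * (N + x.natAbs + 1)),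
      ⟨1, by ring⟩, ?_⟩
    set M := 2 * (N + x.natAbs + 1) with hMdef
    have hEven : Even M := ⟨N + x.natAbs + 1, by omega⟩
    have hMF := le_F M
    have hxF : x < F M := by omega
    rw [e, e, if_pos hEven, if_pos hEven, d_small hx hxF, d_small_succ (by omega) hx hxF]
    norm_num
  · refine ⟨2 * (N + x.natAbs) + 1, by omega, by omega, x - F (2 * (N + x.natAbs) + 1),
      ⟨-1, by ring⟩, ?_⟩
    set M := 2 * (N + x.natAbs) + 1 with hMdef
    have hOdd : ¬ Even M := by rintro ⟨t, ht⟩; omega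
    have hMF := le_F M
    have hxlb : -F M ≤ x := by omega
    rw [e, e, if_neg hOdd, if_neg hOdd, d_neg_top hxlb hx, d_neg_pred (by omega) hxlb hx]
    omega

lemma downMove (x : ℤ) (N : ℕ) :
    ∃ M : ℕ, N ≤ M ∧ 1 ≤ M ∧ ∃ a : ℤ, F M ∣ (a - x) ∧ e M a < e M x := by
  rcases le_or_gt 0 x with hx | hx
  · refine ⟨2 * (N + x.natAbs) + 1, by omega, by omega, x + F (2 * (N + x.natAbs) + 1),
      ⟨1, by ring⟩, ?_⟩
    set M := 2 * (N + x.natAbs) + 1 with hMdef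
    have hOdd : ¬ Even M := by rintro ⟨t, ht⟩; omega
    have hMF := le_F M
    have hxF : x < F M := by omega
    rw [e, e, if_neg hOdd, if_neg hOdd, d_small hx hxF, d_small_succ (by omega) hx hxF]
    omega
  · refine ⟨2 * (N + x.natAbs + 1), by omega, by omega, x - F (2 * (N + x.natAbs + 1)),
      ⟨-1, by ring⟩, ?_⟩
    set M := 2 * (N + x.natAbs + 1) with hMdef
    have hEven : Even M := ⟨N + x.natAbs + 1, by omega⟩
    have hMF := le_F M
    have hxlb : -F M ≤ x := by omega
    rw [e, e, if_pos hEven, if_pos hEven, d_neg_top hxlb hx, d_neg_pred (by omega) hxlb hx]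
    omega

lemma dense_aux {a b : ℤ} (hab : plt a b) : ∃ z : ℤ, plt a z ∧ plt z b := by
  obtain ⟨i, hi1, hid, hie⟩ := hab
  obtain ⟨M, hMi, hM1, z, hzd, hze⟩ := upMove a (i + 1)
  refine ⟨z, ⟨M, hM1, hzd, hze⟩, ⟨i, hi1, ?_, ?_⟩⟩
  · have h1 : F i ∣ (z - a) := dvd_trans (F_dvd (by omega)) hzd
    have h2 : b - z = (b - a) - (z - a) := by ring
    rw [h2]; exact dvd_sub hid h1
  · have : e i a = e i z := e_congr (dvd_trans (F_dvd (by omega)) hzd)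
    omega

lemma min_aux (a : ℤ) : ∃ z : ℤ, plt z a := by
  obtain ⟨M, _, hM1, z, hd, he⟩ := downMove a 1
  refine ⟨z, ⟨M, hM1, ?_, he⟩⟩
  have : a - z = -(z - a) := by ring
  rw [this]; exact dvd_neg.mpr hd

lemma max_aux (a : ℤ) : ∃ z : ℤ, plt a z := by
  obtain ⟨M, _, hM1, z, hd, he⟩ := upMove a 1
  exact ⟨z, ⟨M, hM1, hd, he⟩⟩

instance : DenselyOrdered Zp :=
  ⟨fun a b hab => by
    obtain ⟨z, h1, h2⟩ := dense_aux (lt_iff.mp hab)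
    exact ⟨z, lt_iff.mpr h1, lt_iff.mpr h2⟩⟩

instance : NoMaxOrder Zp :=
  ⟨fun a => by
    obtain ⟨z, h⟩ := max_aux a
    exact ⟨z, lt_iff.mpr h⟩⟩

instance : NoMinOrder Zp :=
  ⟨fun a => by
    obtain ⟨z, h⟩ := min_aux a
    exact ⟨z, lt_iff.mpr h⟩⟩

instance : TopologicalSpace Zp := profiniteTopologyZ

/-- The generators of the profinite topology. -/
def G : Set (Set ℤ) := {U | ∃ z k : ℤ, 1 ≤ k ∧ U = {x : ℤ | ∃ m : ℤ, x = z + k * m}}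

lemma sUnion_open {α : Type*} (g : Set (Set α)) (W : Set α)
    (h : ∀ x ∈ W, ∃ V, TopologicalSpace.GenerateOpen g V ∧ x ∈ V ∧ V ⊆ W) :
    TopologicalSpace.GenerateOpen g W := by
  have hW : W = ⋃₀ {V | TopologicalSpace.GenerateOpen g V ∧ V ⊆ W} := by
    ext y
    constructor
    · intro hy
      obtain ⟨V, hVg, hyV, hVW⟩ := h y hy
      exact ⟨V, ⟨hVg, hVW⟩, hyV⟩
    · rintro ⟨V, ⟨_, hVW⟩, hyV⟩
      exact hVW hyV
  rw [hW]
  exact TopologicalSpace.GenerateOpen.sUnion _ fun V hV => hV.1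

lemma plt_Ioi_open (a : ℤ) : TopologicalSpace.GenerateOpen G {y : ℤ | plt a y} := by
  apply sUnion_open
  intro x hx
  obtain ⟨i, h1, h2, h3⟩ := hx
  refine ⟨{y : ℤ | ∃ m : ℤ, y = x + F (i + 1) * m},
    TopologicalSpace.GenerateOpen.basic _ ⟨x, F (i + 1), by have := F_pos (i + 1); omega, rfl⟩,
    ⟨0, by ring⟩, ?_⟩
  rintro y ⟨m, rfl⟩
  refine ⟨i, h1, ?_, ?_⟩
  · have : x + F (i + 1) * m - a = (x - a) + F (i + 1) * m := by ring
    rw [this]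
    exact dvd_add h2 (dvd_mul_of_dvd_left (F_dvd (Nat.le_succ i)) m)
  · have : e i x = e i (x + F (i + 1) * m) := e_congr ⟨m, by ring⟩
    omega

lemma plt_Iio_open (a : ℤ) : TopologicalSpace.GenerateOpen G {y : ℤ | plt y a} := by
  apply sUnion_open
  intro x hx
  obtain ⟨i, h1, h2, h3⟩ := hx
  refine ⟨{y : ℤ | ∃ m : ℤ, y = x + F (i + 1) * m},
    TopologicalSpace.GenerateOpen.basic _ ⟨x, F (i + 1), by have := F_pos (i + 1); omega, rfl⟩,
    ⟨0, by ring⟩, ?_⟩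
  rintro y ⟨m, rfl⟩
  refine ⟨i, h1, ?_, ?_⟩
  · have : a - (x + F (i + 1) * m) = (a - x) - F (i + 1) * m := by ring
    rw [this]
    exact dvd_sub h2 (dvd_mul_of_dvd_left (F_dvd (Nat.le_succ i)) m)
  · have : e i x = e i (x + F (i + 1) * m) := e_congr ⟨m, by ring⟩
    omega

/-- The generators of the order topology on `Zp`. -/
def R : Set (Set Zp) := {s | ∃ a : Zp, s = Set.Ioi a ∨ s = Set.Iio a}

/-- The identity map `ℤ → Zp`. -/
def toZp : ℤ → Zp := fun x => x

lemma key (x : ℤ) (N : ℕ) :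
    ∃ a b : ℤ, plt a x ∧ plt x b ∧ ∀ y : ℤ, plt a y → plt y b → F N ∣ (y - x) := by
  obtain ⟨M, hNM, hM1, a, had, hae⟩ := downMove x N
  obtain ⟨M', hNM', hM'1, b, hbd, hbe⟩ := upMove x N
  have had' : F M ∣ (x - a) := by
    have : x - a = -(a - x) := by ring
    rw [this]; exact dvd_neg.mpr had
  refine ⟨a, b, ⟨M, hM1, had', hae⟩, ⟨M', hM'1, hbd, hbe⟩, ?_⟩
  intro y hay hyb
  by_cases hxy : y = x
  · subst hxy; simp
  rcases plt_trichotomy (Ne.symm hxy) with ⟨i, hi1, hid, hie⟩ | ⟨i, hi1, hid, hie⟩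
  · have hMi : M' ≤ i := by
      by_contra h'
      have he : e i x = e i b := e_congr (dvd_trans (F_dvd (by omega)) hbd)
      refine plt_asymm hyb ⟨i, hi1, ?_, by omega⟩
      have : y - b = (y - x) - (b - x) := by ring
      rw [this]; exact dvd_sub hid (dvd_trans (F_dvd (by omega)) hbd)
    exact dvd_trans (F_dvd (by omega)) hid
  · have hMi : M ≤ i := by
      by_contra h'
      have he : e i x = e i a := e_congr (dvd_trans (F_dvd (by omega)) had)
      refine plt_asymm hay ⟨i, hi1, ?_, by omega⟩
      have : a - y = (a - x) + (x - y) := by ring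
      rw [this]; exact dvd_add (dvd_trans (F_dvd (by omega)) had) hid
    have : y - x = -(x - y) := by ring
    rw [this]; exact dvd_neg.mpr (dvd_trans (F_dvd (by omega)) hid)

lemma gen_open (z k : ℤ) (hk : 1 ≤ k) :
    TopologicalSpace.GenerateOpen R (toZp '' {x : ℤ | ∃ m : ℤ, x = z + k * m}) := by
  apply sUnion_open
  rintro x ⟨x', hx', rfl⟩
  obtain ⟨m₀, hm₀⟩ := hx'
  set N := k.natAbs with hN
  have hkN : k ∣ F N := by
    have h1 : (k.natAbs : ℤ) = k := Int.natAbs_of_nonneg (by omega)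
    have h2 : k.natAbs ∣ Nat.factorial N := Nat.dvd_factorial (by omega) le_rfl
    have h3 : (k.natAbs : ℤ) ∣ F N := by unfold F; exact_mod_cast h2
    exact h1 ▸ h3
  obtain ⟨a, b, hax, hxb, hsub⟩ := key x' N
  refine ⟨Set.Ioo (toZp a) (toZp b), ?_, ⟨lt_iff.mpr hax, lt_iff.mpr hxb⟩, ?_⟩
  · rw [← Set.Ioi_inter_Iio]
    exact TopologicalSpace.GenerateOpen.inter _ _
      (TopologicalSpace.GenerateOpen.basic _ ⟨toZp a, Or.inl rfl⟩)
      (TopologicalSpace.GenerateOpen.basic _ ⟨toZp b, Or.inr rfl⟩)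
  · rintro y ⟨hy1, hy2⟩
    obtain ⟨c, hc⟩ := dvd_trans hkN (hsub y (lt_iff.mp hy1) (lt_iff.mp hy2))
    exact ⟨y, ⟨m₀ + c, by rw [mul_add, ← add_assoc, ← hm₀, ← hc]; exact (add_sub_cancel x' y).symm⟩, rfl⟩

lemma image_toZp (s : Set ℤ) : toZp '' s = s := by
  ext y
  constructor
  · rintro ⟨x, hx, rfl⟩
    exact hx
  · intro hy
    exact ⟨y, hy, rfl⟩

instance : OrderTopology Zp := by
  constructor
  refine le_antisymm (le_generateFrom ?_) ?_
  · rintro s ⟨a, rfl | rfl⟩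
    · exact plt_Ioi_open a
    · exact plt_Iio_open a
  · show TopologicalSpace.generateFrom _ ≤ TopologicalSpace.generateFrom G
    apply le_generateFrom
    rintro U ⟨z, k, hk, rfl⟩
    have h := gen_open z k hk
    rw [image_toZp] at h
    exact h

end ProfiniteZAux

/-- `ℤ` equipped with the profinite topology is homeomorphic to `ℚ` with its standard
(Euclidean) topology. -/
theorem profiniteZ_homeomorph_rat :
    Nonempty (@Homeomorph ℤ ℚ profiniteTopologyZ inferInstance) := by
  obtain ⟨f⟩ := Order.iso_of_countable_dense (α := ProfiniteZAux.Zp) (β := ℚ)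
  exact ⟨f.toHomeomorph⟩
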